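/- The function ψ solves the Ornstein–Uhlenbeck characteristic equation: for every x ∈ ℝ, (1/2)σ² ψ″(x) + θ(μ − x) ψ′(x) = λ ψ(x). -/

import Mathlib

open MeasureTheory Real Set Filter
open Topology


/-- Integrability of `t^p * exp(-t²/2 + c t)` on `(0, ∞)` for `p > -1`. -/
lemma OU_intOn (p c : ℝ) (hp : -1 < p) :
    IntegrableOn (fun t : ℝ => t ^ p * Real.exp (-t ^ 2 / 2 + c * t)) (Ioi 0) := by
  have hmeas : AEStronglyMeasurable
      (fun t : ℝ => t ^ p * Real.exp (-t ^ 2 / 2 + c * t))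
      (volume.restrict (Ioi 0)) := by
    apply Measurable.aestronglyMeasurable
    fun_prop
  have hbint : IntegrableOn
      (fun t : ℝ => Real.exp (c ^ 2) * (t ^ p * Real.exp (-(1/4 : ℝ) * t ^ 2))) (Ioi 0) :=
    (integrableOn_rpow_mul_exp_neg_mul_sq (by norm_num : (0:ℝ) < 1/4) hp).const_mul _
  refine Integrable.mono' hbint hmeas ?_
  refine (ae_restrict_iff' measurableSet_Ioi).mpr (ae_of_all _ fun t ht => ?_)
  have ht0 : (0:ℝ) < t := ht
  have h1 : (0:ℝ) ≤ t ^ p := Real.rpow_nonneg ht0.le p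
  rw [Real.norm_eq_abs, abs_of_nonneg (by positivity)]
  have hexp : Real.exp (-t ^ 2 / 2 + c * t) ≤ Real.exp (c ^ 2) * Real.exp (-(1/4 : ℝ) * t ^ 2) := by
    rw [← Real.exp_add]
    apply Real.exp_le_exp.mpr
    nlinarith [sq_nonneg (t / 2 - c)]
  calc t ^ p * Real.exp (-t ^ 2 / 2 + c * t)
      ≤ t ^ p * (Real.exp (c ^ 2) * Real.exp (-(1/4 : ℝ) * t ^ 2)) := by
        exact mul_le_mul_of_nonneg_left hexp h1
    _ = Real.exp (c ^ 2) * (t ^ p * Real.exp (-(1/4 : ℝ) * t ^ 2)) := by ring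

/-- Limit at infinity. -/
lemma OU_tendsto_top (p c : ℝ) :
    Tendsto (fun t : ℝ => t ^ p * Real.exp (-t ^ 2 / 2 + c * t)) atTop (𝓝 0) := by
  have h := (tendsto_rpow_mul_exp_neg_mul_atTop_nhds_zero p 1 one_pos).const_mul
      (Real.exp ((c + 1) ^ 2 / 2))
  rw [mul_zero] at h
  refine squeeze_zero' ?_ ?_ h
  · filter_upwards [eventually_gt_atTop (0:ℝ)] with t ht
    positivity
  · filter_upwards [eventually_gt_atTop (0:ℝ)] with t ht
    have h1 : (0:ℝ) ≤ t ^ p := Real.rpow_nonneg ht.le p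
    have hexp : Real.exp (-t ^ 2 / 2 + c * t)
        ≤ Real.exp ((c + 1) ^ 2 / 2) * Real.exp (-1 * t) := by
      rw [← Real.exp_add]
      apply Real.exp_le_exp.mpr
      nlinarith [sq_nonneg (t - (c + 1))]
    calc t ^ p * Real.exp (-t ^ 2 / 2 + c * t)
        ≤ t ^ p * (Real.exp ((c + 1) ^ 2 / 2) * Real.exp (-1 * t)) :=
          mul_le_mul_of_nonneg_left hexp h1
      _ = Real.exp ((c + 1) ^ 2 / 2) * (t ^ p * Real.exp (-1 * t)) := by ring

/-- Key integration-by-parts identity via FTC. -/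
lemma OU_key (p c : ℝ) (hp : 0 < p) :
    ∫ t in Ioi (0:ℝ),
      (p * t ^ (p - 1) + (c - t) * t ^ p) * Real.exp (-t ^ 2 / 2 + c * t) = 0 := by
  have hderiv : ∀ t ∈ Ioi (0:ℝ),
      HasDerivAt (fun t : ℝ => t ^ p * Real.exp (-t ^ 2 / 2 + c * t))
        ((p * t ^ (p - 1) + (c - t) * t ^ p) * Real.exp (-t ^ 2 / 2 + c * t)) t := by
    intro t ht
    have ht0 : t ≠ 0 := ne_of_gt ht
    have h1 : HasDerivAt (fun t : ℝ => t ^ p) (p * t ^ (p - 1)) t :=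
      Real.hasDerivAt_rpow_const (Or.inl ht0)
    have h2 : HasDerivAt (fun t : ℝ => -t ^ 2 / 2 + c * t) (c - t) t := by
      have := (((hasDerivAt_pow 2 t).neg.div_const 2).add ((hasDerivAt_id t).const_mul c))
      refine this.congr_deriv ?_
      simp; ring
    have h3 := h2.exp
    refine (h1.mul h3).congr_deriv ?_
    ring
  have hcont : ContinuousWithinAt (fun t : ℝ => t ^ p * Real.exp (-t ^ 2 / 2 + c * t))
      (Ici 0) 0 := by
    apply ContinuousAt.continuousWithinAt
    exact (Real.continuousAt_rpow_const 0 p (Or.inr hp.le)).mul (by fun_prop)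
  have hint : IntegrableOn
      (fun t : ℝ => (p * t ^ (p - 1) + (c - t) * t ^ p) * Real.exp (-t ^ 2 / 2 + c * t))
      (Ioi 0) := by
    have h : IntegrableOn (fun t : ℝ =>
        p * (t ^ (p - 1) * Real.exp (-t ^ 2 / 2 + c * t)) +
          (c * (t ^ p * Real.exp (-t ^ 2 / 2 + c * t)) -
            t ^ (p + 1) * Real.exp (-t ^ 2 / 2 + c * t))) (Ioi 0) :=
      ((OU_intOn (p - 1) c (by linarith)).const_mul p).add
        (((OU_intOn p c (by linarith)).const_mul c).sub (OU_intOn (p + 1) c (by linarith)))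
    refine IntegrableOn.congr_fun h (fun t ht => ?_) measurableSet_Ioi
    have ht' : (0:ℝ) < t := ht
    have : t ^ (p + 1) = t ^ p * t := Real.rpow_add_one ht'.ne' p
    rw [this]; ring
  rw [integral_Ioi_of_hasDerivAt_of_tendsto hcont hderiv hint (OU_tendsto_top p c)]
  rw [Real.zero_rpow (ne_of_gt hp)]
  ring

/-- Differentiation under the integral sign. -/
lemma OU_hasDerivAt (p a mu : ℝ) (hp : -1 < p) (ha : 0 < a) (x₀ : ℝ) :
    HasDerivAt (fun x : ℝ => ∫ t in Ioi (0:ℝ),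
        t ^ p * Real.exp (-t ^ 2 / 2 + a * t * (x - mu)))
      (∫ t in Ioi (0:ℝ),
        a * (t ^ (p + 1) * Real.exp (-t ^ 2 / 2 + a * t * (x₀ - mu)))) x₀ := by
  have e : ∀ x t : ℝ, a * t * (x - mu) = a * (x - mu) * t := fun x t => by ring
  simp only [e]
  have key := hasDerivAt_integral_of_dominated_loc_of_deriv_le (μ := volume.restrict (Ioi 0))
    (F := fun (x : ℝ) (t : ℝ) => t ^ p * Real.exp (-t ^ 2 / 2 + a * (x - mu) * t))
    (F' := fun (x : ℝ) (t : ℝ) => a * (t ^ (p + 1) * Real.exp (-t ^ 2 / 2 + a * (x - mu) * t)))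
    (x₀ := x₀) (s := Metric.ball x₀ 1) (bound := fun t => a * (t ^ (p + 1) * Real.exp (-t ^ 2 / 2 + a * (|x₀ - mu| + 1) * t)))
    (Metric.ball_mem_nhds x₀ one_pos)
    (Eventually.of_forall fun x => (Measurable.aestronglyMeasurable (by fun_prop)))
    (OU_intOn p (a * (x₀ - mu)) hp)
    (Measurable.aestronglyMeasurable (by fun_prop))
    ?_ (((OU_intOn (p + 1) (a * (|x₀ - mu| + 1)) (by linarith)).const_mul a)) ?_
  · exact key.2
  · refine (ae_restrict_iff' measurableSet_Ioi).mpr (ae_of_all _ fun t ht x hx => ?_)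
    have ht0 : (0:ℝ) < t := ht
    have hxm : x - mu ≤ |x₀ - mu| + 1 := by
      rw [Metric.mem_ball, Real.dist_eq] at hx
      cases' abs_lt.mp hx with h1 h2
      have h3 : x₀ - mu ≤ |x₀ - mu| := le_abs_self _
      linarith
    have h1 : (0:ℝ) ≤ t ^ (p + 1) := Real.rpow_nonneg ht0.le _
    rw [Real.norm_eq_abs, abs_of_nonneg (by positivity)]
    have hee : Real.exp (-t ^ 2 / 2 + a * (x - mu) * t) ≤ Real.exp (-t ^ 2 / 2 + a * (|x₀ - mu| + 1) * t) := by
      apply Real.exp_le_exp.mpr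
      nlinarith [mul_nonneg (mul_nonneg ha.le (sub_nonneg.mpr hxm)) ht0.le]
    show a * (t ^ (p + 1) * Real.exp (-t ^ 2 / 2 + a * (x - mu) * t))
        ≤ a * (t ^ (p + 1) * Real.exp (-t ^ 2 / 2 + a * (|x₀ - mu| + 1) * t))
    exact mul_le_mul_of_nonneg_left (mul_le_mul_of_nonneg_left hee h1) ha.le
  · refine (ae_restrict_iff' measurableSet_Ioi).mpr (ae_of_all _ fun t ht x _ => ?_)
    have ht0 : (t:ℝ) ≠ 0 := ne_of_gt ht
    have h2 : HasDerivAt (fun x : ℝ => -t ^ 2 / 2 + a * (x - mu) * t) (a * t) x := by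
      have := ((((hasDerivAt_id x).sub_const mu).const_mul a).mul_const t).const_add
        (-t ^ 2 / 2)
      refine this.congr_deriv ?_
      ring
    have h3 := (h2.exp).const_mul (t ^ p)
    have heq : a * (t ^ (p + 1) * Real.exp (-t ^ 2 / 2 + a * (x - mu) * t))
        = t ^ p * (Real.exp (-t ^ 2 / 2 + a * (x - mu) * t) * (a * t)) := by
      rw [Real.rpow_add_one ht0 p]; ring
    show HasDerivAt (fun x : ℝ => t ^ p * Real.exp (-t ^ 2 / 2 + a * (x - mu) * t))
        (a * (t ^ (p + 1) * Real.exp (-t ^ 2 / 2 + a * (x - mu) * t))) x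
    rw [heq]
    exact h3


/-- The (positive multiple of the) strictly increasing fundamental solution `ψ_λ` of the
Ornstein–Uhlenbeck equation `(1/2)σ² f'' + θ(μ - x) f' = λ f`, written as the integral
`ψ(x) = ∫₀^∞ t^(λ/θ - 1) exp(-t²/2 + a t (x - μ)) dt` with `a = √(2θ)/σ`. -/
noncomputable def OUpsi (lam th mu sig : ℝ) (x : ℝ) : ℝ :=
  ∫ t in Set.Ioi (0:ℝ),
    t ^ (lam / th - 1) * Real.exp (-t ^ 2 / 2 + Real.sqrt (2 * th) / sig * t * (x - mu))

/-- `ψ` solves the Ornstein–Uhlenbeck characteristic equation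
`(1/2)σ² ψ''(x) + θ(μ - x) ψ'(x) = λ ψ(x)` for every `x ∈ ℝ`. -/
theorem statement4 (lam th mu sig : ℝ)
    (hlam : 0 < lam) (hth : 0 < th) (hmu : 0 < mu) (hsig : 0 < sig) :
    ∀ x : ℝ,
      1 / 2 * sig ^ 2 * deriv (deriv (OUpsi lam th mu sig)) x
        + th * (mu - x) * deriv (OUpsi lam th mu sig) x
      = lam * OUpsi lam th mu sig x := by
  intro x
  have h2th : (0:ℝ) < 2 * th := by linarith
  have ha : 0 < Real.sqrt (2 * th) / sig := div_pos (Real.sqrt_pos.mpr h2th) hsig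
  have hnu : (0:ℝ) < lam / th := div_pos hlam hth
  have hp : (-1:ℝ) < lam / th - 1 := by linarith
  have hp2 : (-1:ℝ) < lam / th - 1 + 1 := by linarith
  have hD : ∀ p : ℝ, -1 < p → ∀ y : ℝ,
      HasDerivAt (fun z : ℝ => ∫ t in Ioi (0:ℝ),
          t ^ p * Real.exp (-t ^ 2 / 2 + Real.sqrt (2 * th) / sig * t * (z - mu)))
        (Real.sqrt (2 * th) / sig * ∫ t in Ioi (0:ℝ),
          t ^ (p + 1) * Real.exp (-t ^ 2 / 2 + Real.sqrt (2 * th) / sig * t * (y - mu))) y := by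
    intro p hp y
    have h := OU_hasDerivAt p (Real.sqrt (2 * th) / sig) mu hp ha y
    rwa [MeasureTheory.integral_const_mul] at h
  have hd1 : deriv (OUpsi lam th mu sig)
      = fun y : ℝ => Real.sqrt (2 * th) / sig * ∫ t in Ioi (0:ℝ),
          t ^ (lam / th - 1 + 1)
            * Real.exp (-t ^ 2 / 2 + Real.sqrt (2 * th) / sig * t * (y - mu)) :=
    funext fun y => (hD _ hp y).deriv
  have hd2 : deriv (deriv (OUpsi lam th mu sig)) x
      = Real.sqrt (2 * th) / sig * (Real.sqrt (2 * th) / sig * ∫ t in Ioi (0:ℝ),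
          t ^ (lam / th - 1 + 1 + 1)
            * Real.exp (-t ^ 2 / 2 + Real.sqrt (2 * th) / sig * t * (x - mu))) := by
    rw [hd1]
    exact (HasDerivAt.const_mul _ (hD _ hp2 x)).deriv
  rw [hd2, hd1]
  show _ = lam * ∫ t in Ioi (0:ℝ),
      t ^ (lam / th - 1) * Real.exp (-t ^ 2 / 2 + Real.sqrt (2 * th) / sig * t * (x - mu))
  have e1 : lam / th - 1 + 1 = lam / th := by ring
  have e2 : lam / th - 1 + 1 + 1 = lam / th + 1 := by ring
  have e3 : ∀ t : ℝ, Real.sqrt (2 * th) / sig * t * (x - mu)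
      = Real.sqrt (2 * th) / sig * (x - mu) * t := fun t => by ring
  simp only [e1, e2, e3]
  -- the key identity
  have hZ := OU_key (lam / th) (Real.sqrt (2 * th) / sig * (x - mu)) hnu
  have heq : EqOn
      (fun t : ℝ => (lam / th * t ^ (lam / th - 1)
          + (Real.sqrt (2 * th) / sig * (x - mu) - t) * t ^ (lam / th))
        * Real.exp (-t ^ 2 / 2 + Real.sqrt (2 * th) / sig * (x - mu) * t))
      (fun t : ℝ => lam / th * (t ^ (lam / th - 1)
          * Real.exp (-t ^ 2 / 2 + Real.sqrt (2 * th) / sig * (x - mu) * t))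
        + (Real.sqrt (2 * th) / sig * (x - mu) * (t ^ (lam / th)
            * Real.exp (-t ^ 2 / 2 + Real.sqrt (2 * th) / sig * (x - mu) * t))
          - t ^ (lam / th + 1)
            * Real.exp (-t ^ 2 / 2 + Real.sqrt (2 * th) / sig * (x - mu) * t)))
      (Ioi 0) := by
    intro t ht
    have ht' : (0:ℝ) < t := ht
    simp only
    rw [Real.rpow_add_one ht'.ne']
    ring
  rw [setIntegral_congr_fun measurableSet_Ioi heq] at hZ
  have hf2 : IntegrableOn (fun t : ℝ => Real.sqrt (2 * th) / sig * (x - mu)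
      * (t ^ (lam / th) * Real.exp (-t ^ 2 / 2 + Real.sqrt (2 * th) / sig * (x - mu) * t)))
      (Ioi 0) := (OU_intOn _ _ (by linarith)).const_mul _
  have hf3 : IntegrableOn (fun t : ℝ => t ^ (lam / th + 1)
      * Real.exp (-t ^ 2 / 2 + Real.sqrt (2 * th) / sig * (x - mu) * t)) (Ioi 0) :=
    OU_intOn _ _ (by linarith)
  have hf1 : IntegrableOn (fun t : ℝ => lam / th
      * (t ^ (lam / th - 1) * Real.exp (-t ^ 2 / 2 + Real.sqrt (2 * th) / sig * (x - mu) * t)))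
      (Ioi 0) := (OU_intOn _ _ hp).const_mul _
  have hg : IntegrableOn (fun t : ℝ => Real.sqrt (2 * th) / sig * (x - mu)
      * (t ^ (lam / th) * Real.exp (-t ^ 2 / 2 + Real.sqrt (2 * th) / sig * (x - mu) * t))
      - t ^ (lam / th + 1)
        * Real.exp (-t ^ 2 / 2 + Real.sqrt (2 * th) / sig * (x - mu) * t)) (Ioi 0) :=
    hf2.sub hf3
  rw [integral_add hf1 hg, integral_sub hf2 hf3,
    MeasureTheory.integral_const_mul, MeasureTheory.integral_const_mul] at hZ
  have hth' : th * (lam / th) = lam := by field_simp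
  have ha2 : sig ^ 2 * (Real.sqrt (2 * th) / sig * (Real.sqrt (2 * th) / sig)) = 2 * th := by
    rw [div_mul_div_comm, Real.mul_self_sqrt h2th.le]
    field_simp
  linear_combination (-th) * hZ
    + (1 / 2 * ∫ t in Ioi (0:ℝ), t ^ (lam / th + 1)
        * Real.exp (-t ^ 2 / 2 + Real.sqrt (2 * th) / sig * (x - mu) * t)) * ha2
    + (∫ t in Ioi (0:ℝ), t ^ (lam / th - 1)
        * Real.exp (-t ^ 2 / 2 + Real.sqrt (2 * th) / sig * (x - mu) * t)) * hth'
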